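/- arXiv:1108.1559 — 5 statements merged into one kernel-verified Lean document; each statement's English description precedes it below -/
import Mathlib

section
/- For Rule 136, defined by g(x,y,z) = y·z, and any n ≥ 1, the triangular blocks b of size n+1 with gⁿ(b) = 1 are exactly those whose entire bottom row equals 1 (b(i,1) = 1 for all 1 ≤ i ≤ n+1), with all other cells arbitrary. Consequently Pₙ(1) = ρ^(n+1) under the Bernoulli-ρ measure. -/
/-- The set of lattice positions of a triangular block of size `r`:
pairs `(i,j)` with `i,j ≥ 1` and `i + j ≤ r + 1`. -/
def Tri (r : ℕ) : Finset (ℕ × ℕ) :=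
  (Finset.range (r + 2) ×ˢ Finset.range (r + 2)).filter
    (fun p => 1 ≤ p.1 ∧ 1 ≤ p.2 ∧ p.1 + p.2 ≤ r + 1)

/-- A triangular block of size `r`: an assignment of values in `{0,1}` to the
positions of `Tri r`. -/
def TriBlock (r : ℕ) := {p // p ∈ Tri r} → Fin 2

instance (r : ℕ) : Fintype (TriBlock r) := by unfold TriBlock; infer_instance
instance (r : ℕ) : DecidableEq (TriBlock r) := by unfold TriBlock; infer_instance

/-- Extend a triangular block to a total function on `ℕ × ℕ` (zero outside). -/
def ext {r : ℕ} (b : TriBlock r) : ℕ → ℕ → Fin 2 :=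
  fun i j => if h : (i, j) ∈ Tri r then b ⟨(i, j), h⟩ else 0

/-- The value of block `b` at position `(i,j)` (zero outside the block). -/
def cell {r : ℕ} (b : TriBlock r) (i j : ℕ) : Fin 2 := ext b i j

/-- One application of the local rule `g` (arguments: top, center, right)
at every site: `c(i,j) = g(b(i,j+1), b(i,j), b(i+1,j))`. -/
def step (g : Fin 2 → Fin 2 → Fin 2 → Fin 2) (s : ℕ → ℕ → Fin 2) : ℕ → ℕ → Fin 2 :=
  fun i j => g (s i (j + 1)) (s i j) (s (i + 1) j)

/-- Restrict a total function to a triangular block of size `r`. -/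
def contract (r : ℕ) (s : ℕ → ℕ → Fin 2) : TriBlock r := fun q => s q.1.1 q.1.2

/-- The block evolution operator: maps a block of size `m` (intended `m = r+1`)
to a block of size `r` via `c(i,j) = g(b(i,j+1), b(i,j), b(i+1,j))`. -/
def evolve (g : Fin 2 → Fin 2 → Fin 2 → Fin 2) {m : ℕ} (r : ℕ) (b : TriBlock m) :
    TriBlock r := contract r (step g (ext b))

/-- The `n`-fold iterate of the block evolution operator, from blocks of size `m`
(intended `m = r + n`) to blocks of size `r`. -/
def evolveN (g : Fin 2 → Fin 2 → Fin 2 → Fin 2) (n : ℕ) {m : ℕ} (r : ℕ)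
    (b : TriBlock m) : TriBlock r := contract r ((step g)^[n] (ext b))

/-- The single-cell block consisting of a `1`. -/
def oneBlock : TriBlock 1 := fun _ => 1

/-- Number of cells in state 1 in a block. -/
def numOnes {r : ℕ} (b : TriBlock r) : ℕ :=
  (@Finset.filter _ (fun x => b x = 1) (fun x => instDecidableEqFin 2 (b x) 1) Finset.univ).card

/-- Number of cells in state 0 in a block. -/
def numZeros {r : ℕ} (b : TriBlock r) : ℕ :=
  (@Finset.filter _ (fun x => b x = 0) (fun x => instDecidableEqFin 2 (b x) 0) Finset.univ).card

/-- The set of `n`-step preimages of the single-cell block `1`: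
blocks of size `n + 1` mapped by `n` iterations of the block evolution
operator of `g` to the single cell `1`. -/
def preimages (g : Fin 2 → Fin 2 → Fin 2 → Fin 2) (n : ℕ) :
    Finset (TriBlock (n + 1)) :=
  Finset.univ.filter (fun b => evolveN g n 1 b = oneBlock)

/-- `Pₙ(1)`: the density of ones after `n` iterations, starting from a
Bernoulli-`ρ` initial measure, computed by summing the probabilities of all
`n`-step preimages of the single cell `1`. -/
noncomputable def Pn (g : Fin 2 → Fin 2 → Fin 2 → Fin 2) (n : ℕ) (ρ : ℝ) : ℝ :=
  ∑ a ∈ preimages g n, ρ ^ numOnes a * (1 - ρ) ^ numZeros a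


/-- Rule 136: `g(x,y,z) = y·z`. -/
def g136 : Fin 2 → Fin 2 → Fin 2 → Fin 2 := fun _ y z => y * z

lemma fin2_mul_eq_one (a b : Fin 2) : a * b = 1 ↔ a = 1 ∧ b = 1 := by
  revert a b; decide

lemma fin2_ne_one (a : Fin 2) : a ≠ 1 ↔ a = 0 := by revert a; decide

lemma iter136 (n : ℕ) (s : ℕ → ℕ → Fin 2) (i j : ℕ) :
    (step g136)^[n] s i j = 1 ↔ ∀ k ≤ n, s (i + k) j = 1 := by
  induction n generalizing i with
  | zero => simp
  | succ n ih =>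
    rw [Function.iterate_succ_apply']
    show g136 _ ((step g136)^[n] s i j) ((step g136)^[n] s (i + 1) j) = 1 ↔ _
    rw [show ∀ x y z, g136 x y z = y * z from fun _ _ _ => rfl,
      fin2_mul_eq_one, ih, ih]
    constructor
    · rintro ⟨h1, h2⟩ k hk
      rcases Nat.eq_or_lt_of_le hk with h | h
      · have : i + k = i + 1 + n := by omega
        rw [this]; exact h2 n le_rfl
      · exact h1 k (by omega)
    · intro h
      refine ⟨fun k hk => h k (by omega), fun k hk => ?_⟩
      have : i + 1 + k = i + (k + 1) := by omega
      rw [this]; exact h (k + 1) (by omega)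

lemma part1 (n : ℕ) (b : TriBlock (n + 1)) :
    evolveN g136 n 1 b = oneBlock ↔ ∀ i, 1 ≤ i → i ≤ n + 1 → cell b i 1 = 1 := by
  have h11 : ((1, 1) : ℕ × ℕ) ∈ Tri 1 := by decide
  constructor
  · intro h i h1 h2
    have h2' : (step g136)^[n] (ext b) 1 1 = 1 := congrFun h ⟨(1, 1), h11⟩
    rw [iter136] at h2'
    have := h2' (i - 1) (by omega)
    rwa [show 1 + (i - 1) = i from by omega] at this
  · intro h
    funext q
    obtain ⟨⟨i, j⟩, hq⟩ := q
    simp only [Tri, Finset.mem_filter] at hq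
    obtain ⟨hi, hj⟩ : i = 1 ∧ j = 1 := by omega
    subst hi; subst hj
    show (step g136)^[n] (ext b) 1 1 = 1
    rw [iter136]
    intro k hk
    exact h (1 + k) (by omega) (by omega)

/-- The bottom row of the triangle, as a finset of the index subtype. -/
def bottomRow (r : ℕ) : Finset {p // p ∈ Tri r} :=
  Finset.univ.filter (fun q => q.1.2 = 1)

lemma card_bottomRow (r : ℕ) : (bottomRow r).card = r := by
  classical
  have h : (bottomRow r).card = (Finset.Icc 1 r).card := by
    apply Finset.card_bij (fun q _ => q.1.1)
    · rintro ⟨⟨i, j⟩, hq⟩ hmem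
      simp only [bottomRow, Finset.mem_filter, Finset.mem_univ, true_and] at hmem
      simp only [Tri, Finset.mem_filter] at hq
      simp only [Finset.mem_Icc]
      omega
    · rintro ⟨⟨i, j⟩, hq⟩ h1 ⟨⟨i', j'⟩, hq'⟩ h2 heq
      simp only [bottomRow, Finset.mem_filter, Finset.mem_univ, true_and] at h1 h2
      simp only at h1 h2 heq
      subst heq; subst h1; subst h2; rfl
    · intro i hi
      simp only [Finset.mem_Icc] at hi
      have hmem : ((i, 1) : ℕ × ℕ) ∈ Tri r := by
        simp only [Tri, Finset.mem_filter, Finset.mem_product, Finset.mem_range]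
        omega
      exact ⟨⟨(i, 1), hmem⟩, by simp [bottomRow], rfl⟩
  rw [h, Nat.card_Icc]; omega

lemma weight_eq_prod {r : ℕ} (ρ : ℝ) (b : TriBlock r) :
    ρ ^ numOnes b * (1 - ρ) ^ numZeros b
      = ∏ x : {p // p ∈ Tri r}, (if b x = 1 then ρ else 1 - ρ) := by
  classical
  erw [@Finset.prod_ite _ _ _ Finset.univ (fun x => b x = 1) (fun x => instDecidableEqFin 2 (b x) 1), Finset.prod_const, Finset.prod_const]
  congr 2
  unfold numZeros
  congr 1
  ext x
  simp [fin2_ne_one]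

open Classical in
lemma sum_part (r : ℕ) (ρ : ℝ) :
    ∑ b ∈ Finset.univ.filter
        (fun b : TriBlock r => ∀ x ∈ bottomRow r, b x = 1),
      ρ ^ numOnes b * (1 - ρ) ^ numZeros b = ρ ^ r := by
  classical
  have hw : ∀ b ∈ Finset.univ.filter
      (fun b : TriBlock r => ∀ x ∈ bottomRow r, b x = 1),
      ρ ^ numOnes b * (1 - ρ) ^ numZeros b
        = ∏ x : {p // p ∈ Tri r},
            (if x ∈ bottomRow r then (if b x = 1 then ρ else 0)
             else (if b x = 1 then ρ else 1 - ρ)) := by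
    intro b hb
    simp only [Finset.mem_filter, Finset.mem_univ, true_and] at hb
    rw [weight_eq_prod]
    apply Finset.prod_congr rfl
    intro x _
    by_cases hx : x ∈ bottomRow r
    · simp [hx, hb x hx]
    · rw [if_neg hx]
  rw [Finset.sum_congr rfl hw]
  set w : {p // p ∈ Tri r} → Fin 2 → ℝ := fun x v =>
    (if x ∈ bottomRow r then (if v = 1 then ρ else 0)
     else (if v = 1 then ρ else 1 - ρ)) with hwdef
  have hzero : ∑ b ∈ Finset.univ.filter
      (fun b : TriBlock r => ¬ ∀ x ∈ bottomRow r, b x = 1),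
      ∏ x : {p // p ∈ Tri r}, w x (b x) = 0 := by
    apply Finset.sum_eq_zero
    intro b hb
    simp only [Finset.mem_filter, Finset.mem_univ, true_and] at hb
    push_neg at hb
    obtain ⟨x, hxS, hbx⟩ := hb
    apply Finset.prod_eq_zero (Finset.mem_univ x)
    simp [hwdef, hxS, hbx]
  have hfull : ∑ b ∈ (Finset.univ : Finset (TriBlock r)),
      ∏ x : {p // p ∈ Tri r}, w x (b x)
      = ∏ x : {p // p ∈ Tri r}, ∑ v : Fin 2, w x v := by
    have key : (∏ x : {p // p ∈ Tri r}, ∑ v ∈ (Finset.univ : Finset (Fin 2)), w x v)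
        = ∑ b ∈ Fintype.piFinset (fun _ : {p // p ∈ Tri r} =>
            (Finset.univ : Finset (Fin 2))), ∏ x, w x (b x) :=
      Finset.prod_univ_sum _ _
    rw [Fintype.piFinset_univ] at key
    exact key.symm
  have hsplit := Finset.sum_filter_add_sum_filter_not Finset.univ
      (fun b : TriBlock r => ∀ x ∈ bottomRow r, b x = 1)
      (fun b => ∏ x : {p // p ∈ Tri r}, w x (b x))
  rw [hzero, add_zero, hfull] at hsplit
  rw [hsplit]
  have hcol : ∀ x : {p // p ∈ Tri r},
      (∑ v : Fin 2, w x v) = if x ∈ bottomRow r then ρ else 1 := by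
    intro x
    rw [Fin.sum_univ_two]
    by_cases hx : x ∈ bottomRow r <;> simp [hwdef, hx]
  rw [Finset.prod_congr rfl (fun x _ => hcol x), Finset.prod_ite_mem,
    Finset.univ_inter, Finset.prod_const, card_bottomRow]

/-- for Rule 136 and `n ≥ 1`, the `n`-step preimages of the single
cell `1` are exactly the size-`n+1` blocks whose whole bottom row is `1`
(`b(i,1) = 1` for all `1 ≤ i ≤ n+1`); consequently `Pₙ(1) = ρ^(n+1)`. -/
theorem stmt2 (n : ℕ) (hn : 1 ≤ n) (ρ : ℝ) (hρ : ρ ∈ Set.Icc (0 : ℝ) 1) :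
    (∀ b : TriBlock (n + 1),
        evolveN g136 n 1 b = oneBlock ↔
          ∀ i, 1 ≤ i → i ≤ n + 1 → cell b i 1 = 1) ∧
      Pn g136 n ρ = ρ ^ (n + 1) := by
  classical
  refine ⟨part1 n, ?_⟩
  have hpre : preimages g136 n = Finset.univ.filter
      (fun b : TriBlock (n + 1) => ∀ x ∈ bottomRow (n + 1), b x = 1) := by
    unfold preimages
    apply Finset.filter_congr
    intro b _
    rw [part1]
    constructor
    · intro h x hx
      obtain ⟨⟨i, j⟩, hq⟩ := x
      simp only [bottomRow, Finset.mem_filter, Finset.mem_univ, true_and] at hx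
      subst hx
      have hq' := hq
      simp only [Tri, Finset.mem_filter] at hq'
      have := h i (by omega) (by omega)
      simpa [cell, ext, hq] using this
    · intro h i h1 h2
      have hmem : ((i, 1) : ℕ × ℕ) ∈ Tri (n + 1) := by
        simp only [Tri, Finset.mem_filter, Finset.mem_product, Finset.mem_range]
        omega
      have := h ⟨(i, 1), hmem⟩ (by simp [bottomRow])
      simpa [cell, ext, hmem] using this
  rw [Pn, hpre, sum_part]
end

section
/- For Rule 42, defined by its truth table with g(0,0,0)=0, g(0,0,1)=1, g(0,1,0)=0, g(0,1,1)=1, g(1,0,0)=0, g(1,0,1)=1, g(1,1,0)=0, g(1,1,1)=0 (arguments ordered as top, center, right), and any n ≥ 1, the triangular blocks b of size n+1 with gⁿ(b) = 1 are exactly: (i) blocks with b(n+1,1)=1 and b(n,2)=0, other cells arbitrary; or (ii) blocks with b(n+1,1)=1, b(n,2)=1, b(n,1)=0, other cells arbitrary. Consequently Pₙ(1) = ρ(1−ρ)(1+ρ) for all n. -/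
/-- Rule 42, given by its truth table with arguments (top, center, right):
output 1 exactly on (0,0,1), (0,1,1) and (1,0,1). -/
def g42 : Fin 2 → Fin 2 → Fin 2 → Fin 2 := fun x y z =>
  if (x = 0 ∧ y = 0 ∧ z = 1) ∨ (x = 0 ∧ y = 1 ∧ z = 1) ∨ (x = 1 ∧ y = 0 ∧ z = 1)
    then 1 else 0

/-! ### Auxiliary lemmas -/

lemma fin2_or (v : Fin 2) : v = 0 ∨ v = 1 := by revert v; decide

def Good (s : ℕ → ℕ → Fin 2) : Prop :=
  ∀ i j, s i (j + 1) = 1 → s i j = 1 → s (i + 1) j = 0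

lemma g42_right {x y z : Fin 2} (h : g42 x y z = 1) : z = 1 := by
  revert h; revert x y z; decide

lemma g42_one_one (x : Fin 2) : g42 1 1 x = 0 := by revert x; decide

lemma good_step (s : ℕ → ℕ → Fin 2) : Good (step g42 s) := by
  intro i j h1 h2
  have a1 : s (i + 1) (j + 1) = 1 := g42_right h1
  have a2 : s (i + 1) j = 1 := g42_right h2
  show g42 (s (i+1) (j+1)) (s (i+1) j) (s (i+1+1) j) = 0
  rw [a1, a2, g42_one_one]

lemma step_eq_shift {s : ℕ → ℕ → Fin 2} (hs : Good s) (i j : ℕ) :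
    step g42 s i j = s (i + 1) j := by
  by_cases h : s i (j + 1) = 1 ∧ s i j = 1
  · show g42 _ _ _ = _
    rw [h.1, h.2, g42_one_one, hs i j h.1 h.2]
  · show g42 _ _ _ = _
    have key : ∀ x y z : Fin 2, ¬(x = 1 ∧ y = 1) → g42 x y z = z := by decide
    exact key _ _ _ h

lemma iterate_good (s : ℕ → ℕ → Fin 2) (m : ℕ) :
    Good ((step g42)^[m] (step g42 s)) := by
  cases m with
  | zero => simpa using good_step s
  | succ k => rw [Function.iterate_succ_apply']; exact good_step _

lemma iterate_step (s : ℕ → ℕ → Fin 2) (m : ℕ) :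
    ∀ i j, (step g42)^[m] (step g42 s) i j = step g42 s (i + m) j := by
  induction m with
  | zero => intro i j; simp
  | succ m ih =>
    intro i j
    rw [Function.iterate_succ_apply', step_eq_shift (iterate_good s m), ih]
    have : i + 1 + m = i + (m + 1) := by omega
    rw [this]

lemma sum_prod_fin2 {α : Type*} [Fintype α] [DecidableEq α] (W : α → Fin 2 → ℝ) :
    ∑ f : α → Fin 2, ∏ x, W x (f x) = ∏ x, (W x 0 + W x 1) := by
  rw [← Fintype.prod_sum W]
  exact Finset.prod_congr rfl fun x _ => Fin.sum_univ_two _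

lemma sum_filter_fixed {α : Type*} [Fintype α] [DecidableEq α] (w : Fin 2 → ℝ)
    (hw : w 0 + w 1 = 1) (E : Finset α) (val : α → Fin 2) :
    ∑ f ∈ Finset.univ.filter (fun f : α → Fin 2 => ∀ x ∈ E, f x = val x), ∏ x, w (f x)
      = ∏ x ∈ E, w (val x) := by
  classical
  set W : α → Fin 2 → ℝ :=
    fun x v => (if x ∈ E then (if v = val x then (1:ℝ) else 0) else 1) * w v with hW
  have key : ∀ f : α → Fin 2,
      (if (∀ x ∈ E, f x = val x) then ∏ x, w (f x) else 0) = ∏ x, W x (f x) := by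
    intro f
    by_cases hf : ∀ x ∈ E, f x = val x
    · rw [if_pos hf]
      apply Finset.prod_congr rfl
      intro x _
      by_cases hx : x ∈ E
      · simp [hW, hx, hf x hx]
      · simp [hW, hx]
    · rw [if_neg hf]
      push_neg at hf
      obtain ⟨x, hxE, hxv⟩ := hf
      symm
      apply Finset.prod_eq_zero (Finset.mem_univ x)
      simp [hW, hxE, hxv]
  rw [Finset.sum_filter, Finset.sum_congr rfl (fun f _ => key f), sum_prod_fin2]
  rw [← Finset.prod_subset (Finset.subset_univ E)
      (fun x _ hx => by simp [hW, hx, hw])]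
  apply Finset.prod_congr rfl
  intro x hx
  rcases fin2_or (val x) with h | h <;> simp [hW, hx, h]

/-- for Rule 42 and `n ≥ 1`, the `n`-step preimages of the single
cell `1` are exactly: (i) blocks with `b(n+1,1)=1`, `b(n,2)=0`; or (ii) blocks
with `b(n+1,1)=1`, `b(n,2)=1`, `b(n,1)=0`; other cells arbitrary. Consequently
`Pₙ(1) = ρ(1−ρ)(1+ρ)` for all such `n`. -/
theorem stmt3 (n : ℕ) (hn : 1 ≤ n) (ρ : ℝ) (hρ : ρ ∈ Set.Icc (0 : ℝ) 1) :
    (∀ b : TriBlock (n + 1),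
        evolveN g42 n 1 b = oneBlock ↔
          ((cell b (n + 1) 1 = 1 ∧ cell b n 2 = 0) ∨
            (cell b (n + 1) 1 = 1 ∧ cell b n 2 = 1 ∧ cell b n 1 = 0))) ∧
      Pn g42 n ρ = ρ * (1 - ρ) * (1 + ρ) := by
  classical
  have h1 : ((n + 1 : ℕ), (1 : ℕ)) ∈ Tri (n + 1) := by
    simp only [Tri, Finset.mem_filter, Finset.mem_product, Finset.mem_range]
    omega
  have h2 : ((n : ℕ), (2 : ℕ)) ∈ Tri (n + 1) := by
    simp only [Tri, Finset.mem_filter, Finset.mem_product, Finset.mem_range]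
    omega
  have h3 : ((n : ℕ), (1 : ℕ)) ∈ Tri (n + 1) := by
    simp only [Tri, Finset.mem_filter, Finset.mem_product, Finset.mem_range]
    omega
  set q1 : {p // p ∈ Tri (n + 1)} := ⟨(n + 1, 1), h1⟩ with hq1
  set q2 : {p // p ∈ Tri (n + 1)} := ⟨(n, 2), h2⟩ with hq2
  set q3 : {p // p ∈ Tri (n + 1)} := ⟨(n, 1), h3⟩ with hq3
  have hne12 : q1 ≠ q2 := by
    rw [hq1, hq2]; intro h; rw [Subtype.mk_eq_mk, Prod.mk.injEq] at h; omega
  have hne13 : q1 ≠ q3 := by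
    rw [hq1, hq3]; intro h; rw [Subtype.mk_eq_mk, Prod.mk.injEq] at h; omega
  have hne23 : q2 ≠ q3 := by
    rw [hq2, hq3]; intro h; rw [Subtype.mk_eq_mk, Prod.mk.injEq] at h; omega
  have e1 : ∀ b : TriBlock (n + 1), cell b (n + 1) 1 = b q1 := fun b => dif_pos h1
  have e2 : ∀ b : TriBlock (n + 1), cell b n 2 = b q2 := fun b => dif_pos h2
  have e3 : ∀ b : TriBlock (n + 1), cell b n 1 = b q3 := fun b => dif_pos h3
  -- Part 1: characterization of the preimages
  have part1 : ∀ b : TriBlock (n + 1),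
      evolveN g42 n 1 b = oneBlock ↔
        ((cell b (n + 1) 1 = 1 ∧ cell b n 2 = 0) ∨
          (cell b (n + 1) 1 = 1 ∧ cell b n 2 = 1 ∧ cell b n 1 = 0)) := by
    intro b
    obtain ⟨k, hk⟩ : ∃ k, n = k + 1 := ⟨n - 1, by omega⟩
    subst hk
    have hiter : (step g42)^[k + 1] (ext b) 1 1
        = g42 (cell b (k + 1) 2) (cell b (k + 1) 1) (cell b (k + 1 + 1) 1) := by
      rw [Function.iterate_succ_apply, iterate_step]
      show g42 (ext b (1 + k) (1 + 1)) (ext b (1 + k) 1) (ext b (1 + k + 1) 1) = _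
      have e : 1 + k = k + 1 := by omega
      rw [e]
      rfl
    have hone : evolveN g42 (k + 1) 1 b = oneBlock ↔
        (step g42)^[k + 1] (ext b) 1 1 = 1 := by
      constructor
      · intro h
        have h11 : ((1 : ℕ), (1 : ℕ)) ∈ Tri 1 := by decide
        exact congrFun h ⟨(1, 1), h11⟩
      · intro h
        funext q
        obtain ⟨⟨i, j⟩, hq⟩ := q
        have hq' := hq
        simp only [Tri, Finset.mem_filter, Finset.mem_product, Finset.mem_range] at hq'
        obtain ⟨hi, hj⟩ : i = 1 ∧ j = 1 := by omega
        subst hi; subst hj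
        exact h
    have truth : ∀ x y z : Fin 2,
        (g42 x y z = 1 ↔ (z = 1 ∧ x = 0) ∨ (z = 1 ∧ x = 1 ∧ y = 0)) := by decide
    rw [hone, hiter]
    exact truth _ _ _
  refine ⟨part1, ?_⟩
  -- Part 2: the density computation
  set w : Fin 2 → ℝ := fun v => if v = 1 then ρ else 1 - ρ with hw
  have hw01 : w 0 + w 1 = 1 := by simp [hw]
  have hweight : ∀ b : TriBlock (n + 1),
      ρ ^ numOnes b * (1 - ρ) ^ numZeros b = ∏ x, w (b x) := by
    intro b
    have hprod : ∏ x, w (b x) =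
        (∏ x ∈ Finset.univ.filter (fun x => b x = 1), ρ) *
          ∏ x ∈ Finset.univ.filter (fun x => ¬ b x = 1), (1 - ρ) := by
      simp only [hw]
      convert Finset.prod_ite (p := fun x => b x = 1) (fun _ => ρ) (fun _ => 1 - ρ)
    have hfil : (Finset.univ.filter fun x => b x = 0)
        = (Finset.univ.filter fun x => ¬ b x = 1) := by
      apply Finset.filter_congr
      intro x _
      rcases fin2_or (b x) with h | h <;> simp [h]
    have hc : numZeros b = (Finset.univ.filter fun x => ¬ b x = 1).card := by
      unfold numZeros; convert congrArg Finset.card hfil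
    rw [hc, hprod, Finset.prod_const, Finset.prod_const]
    unfold numOnes; congr
  have hpre : preimages g42 n = Finset.univ.filter
      (fun b : TriBlock (n + 1) =>
        (b q1 = 1 ∧ b q2 = 0) ∨ (b q1 = 1 ∧ b q2 = 1 ∧ b q3 = 0)) := by
    unfold preimages
    apply Finset.filter_congr
    intro b _
    rw [part1 b, e1 b, e2 b, e3 b]
  have hdisj : Disjoint
      (Finset.univ.filter fun b : TriBlock (n + 1) => b q1 = 1 ∧ b q2 = 0)
      (Finset.univ.filter fun b : TriBlock (n + 1) => b q1 = 1 ∧ b q2 = 1 ∧ b q3 = 0) := by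
    rw [Finset.disjoint_left]
    intro b hb hb'
    simp only [Finset.mem_filter] at hb hb'
    exact absurd (hb.2.2.symm.trans hb'.2.2.1) (by decide)
  have hc1 : (Finset.univ.filter fun b : TriBlock (n + 1) => b q1 = 1 ∧ b q2 = 0)
      = Finset.univ.filter (fun b : TriBlock (n + 1) =>
          ∀ x ∈ ({q1, q2} : Finset _), b x = if x = q2 then 0 else 1) := by
    apply Finset.filter_congr
    intro b _
    simp [Finset.mem_insert, Finset.mem_singleton, forall_eq_or_imp, forall_eq, hne12]
  have hc2 : (Finset.univ.filter fun b : TriBlock (n + 1) => b q1 = 1 ∧ b q2 = 1 ∧ b q3 = 0)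
      = Finset.univ.filter (fun b : TriBlock (n + 1) =>
          ∀ x ∈ ({q1, q2, q3} : Finset _), b x = if x = q3 then 0 else 1) := by
    apply Finset.filter_congr
    intro b _
    simp [Finset.mem_insert, Finset.mem_singleton, forall_eq_or_imp, forall_eq, hne13, hne23]
  have hS1 : (∑ b ∈ Finset.univ.filter (fun b : TriBlock (n + 1) =>
        ∀ x ∈ ({q1, q2} : Finset _), b x = if x = q2 then 0 else 1), ∏ x, w (b x))
      = ρ * (1 - ρ) := by
    have key := sum_filter_fixed (α := {p // p ∈ Tri (n + 1)}) w hw01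
      ({q1, q2} : Finset _) (fun x => if x = q2 then 0 else 1)
    rw [Finset.prod_insert (by simp [hne12]), Finset.prod_singleton] at key
    have hv : w (if q1 = q2 then 0 else 1) * w (if q2 = q2 then 0 else 1)
        = ρ * (1 - ρ) := by
      rw [if_neg hne12, if_pos rfl]
      simp [hw]
    rw [hv] at key
    unfold TriBlock
    convert key using 3
  have hS2 : (∑ b ∈ Finset.univ.filter (fun b : TriBlock (n + 1) =>
        ∀ x ∈ ({q1, q2, q3} : Finset _), b x = if x = q3 then 0 else 1), ∏ x, w (b x))
      = ρ * ρ * (1 - ρ) := by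
    have key := sum_filter_fixed (α := {p // p ∈ Tri (n + 1)}) w hw01
      ({q1, q2, q3} : Finset _) (fun x => if x = q3 then 0 else 1)
    rw [Finset.prod_insert (by simp [hne12, hne13]),
      Finset.prod_insert (by simp [hne23]), Finset.prod_singleton] at key
    have hv : w (if q1 = q3 then 0 else 1) * (w (if q2 = q3 then 0 else 1)
        * w (if q3 = q3 then 0 else 1)) = ρ * ρ * (1 - ρ) := by
      rw [if_neg hne13, if_neg hne23, if_pos rfl]
      simp [hw]
      ring
    rw [hv] at key
    unfold TriBlock
    convert key using 3
  unfold Pn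
  rw [hpre, Finset.sum_congr rfl (fun b _ => hweight b), Finset.filter_or,
    Finset.sum_union hdisj, hc1, hc2, hS1, hS2]
  ring
end

section
/- Let g : {0,1}³ → {0,1} be permutive in the center variable, i.e., for all fixed x,z the map y ↦ g(x,y,z) is a bijection of {0,1}. Then for every n ≥ 1 and every triangular block b of size n, the number of triangular blocks c of size n+1 with g(c) = b is exactly 2^(n+1). -/
-- auxiliary
lemma mem_Tri {r i j : ℕ} : (i, j) ∈ Tri r ↔ 1 ≤ i ∧ 1 ≤ j ∧ i + j ≤ r + 1 := by
  simp only [Tri, Finset.mem_filter, Finset.mem_product, Finset.mem_range]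
  constructor
  · rintro ⟨_, h⟩; exact h
  · rintro ⟨h1, h2, h3⟩; exact ⟨⟨by omega, by omega⟩, h1, h2, h3⟩

lemma cell_eq {r : ℕ} (c : TriBlock r) {i j : ℕ} (h : (i, j) ∈ Tri r) :
    cell c i j = c ⟨(i, j), h⟩ := by
  unfold cell ext; rw [dif_pos h]

def ginv (g : Fin 2 → Fin 2 → Fin 2 → Fin 2) (x z w : Fin 2) : Fin 2 :=
  if g x 0 z = w then 0 else 1

lemma ginv_g (g : Fin 2 → Fin 2 → Fin 2 → Fin 2)
    (hg : ∀ x z, Function.Bijective (fun y => g x y z)) (x z y : Fin 2) :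
    ginv g x z (g x y z) = y := by
  unfold ginv
  have hne : g x 0 z ≠ g x 1 z := fun h' => by
    have := (hg x z).1 h'; simp at this
  fin_cases y
  · simp
  · simp [hne]

lemma g_ginv (g : Fin 2 → Fin 2 → Fin 2 → Fin 2)
    (hg : ∀ x z, Function.Bijective (fun y => g x y z)) (x z w : Fin 2) :
    g x (ginv g x z w) z = w := by
  obtain ⟨y, hy⟩ := (hg x z).2 w
  simp only at hy
  rw [← hy, ginv_g g hg]

def diagE (g : Fin 2 → Fin 2 → Fin 2 → Fin 2) (n : ℕ) (b : TriBlock n)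
    (d : ℕ → Fin 2) : ℕ → ℕ → Fin 2
  | 0, i => d i
  | (k+1), i => ginv g (diagE g n b d k i) (diagE g n b d k (i+1))
      (cell b i (n + 1 - k - i))

def Build (g : Fin 2 → Fin 2 → Fin 2 → Fin 2) (n : ℕ) (b : TriBlock n)
    (d : ℕ → Fin 2) : TriBlock (n + 1) :=
  fun q => diagE g n b d (n + 2 - (q.1.1 + q.1.2)) q.1.1

lemma cell_Build (g : Fin 2 → Fin 2 → Fin 2 → Fin 2) (n : ℕ) (b : TriBlock n)
    (d : ℕ → Fin 2) {i j : ℕ} (h1 : 1 ≤ i) (h2 : 1 ≤ j) (h3 : i + j ≤ n + 2) :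
    cell (Build g n b d) i j = diagE g n b d (n + 2 - (i + j)) i := by
  have hm : (i, j) ∈ Tri (n + 1) := mem_Tri.2 ⟨h1, h2, by omega⟩
  rw [cell_eq _ hm]; rfl

lemma det (g : Fin 2 → Fin 2 → Fin 2 → Fin 2)
    (hg : ∀ x z, Function.Bijective (fun y => g x y z)) (n : ℕ) (b : TriBlock n)
    (c : TriBlock (n + 1))
    (hc : ∀ i j, 1 ≤ i → 1 ≤ j → i + j ≤ n + 1 →
      g (cell c i (j+1)) (cell c i j) (cell c (i+1) j) = cell b i j)
    (d : ℕ → Fin 2) (hd : ∀ i, 1 ≤ i → i ≤ n + 1 → d i = cell c i (n + 2 - i)) :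
    ∀ k i j, 1 ≤ i → 1 ≤ j → i + j + k = n + 2 → diagE g n b d k i = cell c i j := by
  intro k
  induction k with
  | zero =>
    intro i j h1 h2 h3
    have : j = n + 2 - i := by omega
    subst this
    exact hd i h1 (by omega)
  | succ k ih =>
    intro i j h1 h2 h3
    show ginv g (diagE g n b d k i) (diagE g n b d k (i+1)) (cell b i (n+1-k-i))
      = cell c i j
    have hj : n + 1 - k - i = j := by omega
    rw [hj, ih i (j+1) h1 (by omega) (by omega), ih (i+1) j (by omega) h2 (by omega),
      ← hc i j h1 h2 (by omega), ginv_g g hg]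

-- extend a Fin-indexed diagonal to ℕ
def dext (n : ℕ) (d : Fin (n + 1) → Fin 2) : ℕ → Fin 2 :=
  fun i => if h : i - 1 < n + 1 then d ⟨i - 1, h⟩ else 0

lemma Build_preimage (g : Fin 2 → Fin 2 → Fin 2 → Fin 2)
    (hg : ∀ x z, Function.Bijective (fun y => g x y z)) (n : ℕ) (b : TriBlock n)
    (d : ℕ → Fin 2) : evolve g n (Build g n b d) = b := by
  funext q
  obtain ⟨⟨i, j⟩, hq⟩ := q
  obtain ⟨h1, h2, h3⟩ := mem_Tri.1 hq
  show g (cell (Build g n b d) i (j+1)) (cell (Build g n b d) i j)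
      (cell (Build g n b d) (i+1) j) = b ⟨(i, j), hq⟩
  rw [cell_Build g n b d h1 (by omega) (by omega),
      cell_Build g n b d h1 h2 (by omega),
      cell_Build g n b d (by omega) h2 (by omega)]
  set m := n + 1 - (i + j) with hm
  have e1 : n + 2 - (i + (j + 1)) = m := by omega
  have e2 : n + 2 - (i + j) = m + 1 := by omega
  have e3 : n + 2 - (i + 1 + j) = m := by omega
  rw [e1, e2, e3]
  show g (diagE g n b d m i)
      (ginv g (diagE g n b d m i) (diagE g n b d m (i+1)) (cell b i (n+1-m-i)))
      (diagE g n b d m (i+1)) = b ⟨(i, j), hq⟩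
  have : n + 1 - m - i = j := by omega
  rw [this, g_ginv g hg, cell_eq b hq]

/-- if `g` is permutive in the center variable, then every
triangular block of size `n` (`n ≥ 1`) has exactly `2^(n+1)` one-step preimages
under the block evolution operator. -/
theorem stmt5 (g : Fin 2 → Fin 2 → Fin 2 → Fin 2)
    (hg : ∀ x z, Function.Bijective (fun y => g x y z))
    (n : ℕ) (hn : 1 ≤ n) (b : TriBlock n) :
    (Finset.univ.filter (fun c : TriBlock (n + 1) => evolve g n c = b)).card
      = 2 ^ (n + 1) := by
  have key : ∀ c : TriBlock (n + 1), evolve g n c = b →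
      ∀ i j, 1 ≤ i → 1 ≤ j → i + j ≤ n + 1 →
      g (cell c i (j+1)) (cell c i j) (cell c (i+1) j) = cell b i j := by
    intro c hc i j h1 h2 h3
    have hm : (i, j) ∈ Tri n := mem_Tri.2 ⟨h1, h2, h3⟩
    have := congrFun hc ⟨(i, j), hm⟩
    rw [cell_eq b hm, ← this]
    rfl
  rw [show (2 : ℕ) ^ (n + 1) = Fintype.card (Fin (n + 1) → Fin 2) by simp,
    ← Finset.card_univ]
  apply Finset.card_bij'
    (i := fun c _ => (fun i : Fin (n + 1) => cell c (i.val + 1) (n + 1 - i.val)))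
    (j := fun d _ => Build g n b (dext n d))
  · intro _ _; exact Finset.mem_univ _
  · intro d _
    simp only [Finset.mem_filter, Finset.mem_univ, true_and]
    exact Build_preimage g hg n b (dext n d)
  · -- left inverse : Build (dext (diag c)) = c
    intro c hc
    simp only [Finset.mem_filter, Finset.mem_univ, true_and] at hc
    funext q
    obtain ⟨⟨i, j⟩, hq⟩ := q
    obtain ⟨h1, h2, h3⟩ := mem_Tri.1 hq
    have hd : ∀ i, 1 ≤ i → i ≤ n + 1 →
        dext n (fun i : Fin (n+1) => cell c (i.val + 1) (n + 1 - i.val)) i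
          = cell c i (n + 2 - i) := by
      intro i hi1 hi2
      have hlt : i - 1 < n + 1 := by omega
      show (if h : i - 1 < n + 1 then cell c (i - 1 + 1) (n + 1 - (i - 1)) else 0)
        = cell c i (n + 2 - i)
      rw [dif_pos hlt]
      congr 1 <;> omega
    have hB := det g hg n b c (key c hc) _ hd (n + 2 - (i + j)) i j h1 h2 (by omega)
    show diagE g n b _ (n + 2 - (i + j)) i = c ⟨(i, j), hq⟩
    rw [hB, cell_eq c hq]
  · -- right inverse : diag (Build (dext d)) = d
    intro d _
    funext i
    show cell (Build g n b (dext n d)) (i.val + 1) (n + 1 - i.val) = d i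
    rw [cell_Build g n b _ (by omega) (by omega) (by omega)]
    have e : n + 2 - (i.val + 1 + (n + 1 - i.val)) = 0 := by omega
    rw [e]
    show dext n d (i.val + 1) = d i
    have hlt : i.val + 1 - 1 < n + 1 := by omega
    show (if h : i.val + 1 - 1 < n + 1 then d ⟨i.val + 1 - 1, h⟩ else 0) = d i
    rw [dif_pos hlt]
    congr 1
end

section
/- Let g : {0,1}³ → {0,1} be permutive in the center variable. Then for every n ≥ 1, the number of triangular blocks of size n+1 mapping to the single-cell block 1 under gⁿ equals 2^((n²+3n+2)/2 − 1) = 2^((n²+3n)/2), i.e., exactly half of all triangular blocks of size n+1. -/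
/-! ### Auxiliary lemmas -/

/-- Update a total configuration at position `(1,1)`. -/
def upd (s : ℕ → ℕ → Fin 2) (y : Fin 2) : ℕ → ℕ → Fin 2 :=
  fun i j => if i = 1 ∧ j = 1 then y else s i j

/-- Locality of the iterated evolution: the value at `(i,j)` after `n` steps
depends only on the original values at `(i',j')` with `i ≤ i'`, `j ≤ j'`,
`i' + j' ≤ i + j + n`. -/
lemma step_local (g : Fin 2 → Fin 2 → Fin 2 → Fin 2) (n : ℕ) :
    ∀ (s t : ℕ → ℕ → Fin 2) (i j : ℕ),
      (∀ i' j', i ≤ i' → j ≤ j' → i' + j' ≤ i + j + n → s i' j' = t i' j') →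
      (step g)^[n] s i j = (step g)^[n] t i j := by
  induction n with
  | zero =>
    intro s t i j h
    simpa using h i j le_rfl le_rfl (by omega)
  | succ n ih =>
    intro s t i j h
    rw [Function.iterate_succ_apply, Function.iterate_succ_apply]
    apply ih
    intro i' j' hi hj hb
    simp only [step]
    rw [h i' (j' + 1) hi (by omega) (by omega),
        h i' j' hi hj (by omega),
        h (i' + 1) j' (by omega) hj (by omega)]

/-- If `g` is permutive in the center, the value at `(1,1)` after `n` steps is a
bijective function of the initial value at `(1,1)`. -/
lemma key (g : Fin 2 → Fin 2 → Fin 2 → Fin 2)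
    (hg : ∀ x z, Function.Bijective (fun y => g x y z)) :
    ∀ (n : ℕ) (s : ℕ → ℕ → Fin 2),
      Function.Bijective (fun y => (step g)^[n] (upd s y) 1 1) := by
  intro n
  induction n with
  | zero =>
    intro s
    have h : (fun y => (step g)^[0] (upd s y) 1 1) = id := by
      funext y; simp [upd]
    rw [h]; exact Function.bijective_id
  | succ n ih =>
    intro s
    have h : (fun y => (step g)^[n + 1] (upd s y) 1 1)
        = (fun y' => (step g)^[n] (upd (step g (upd s 0)) y') 1 1)
          ∘ (fun y => g (s 1 2) y (s 2 1)) := by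
      funext y
      simp only [Function.comp_apply]
      rw [Function.iterate_succ_apply]
      apply step_local
      intro i' j' hi hj _
      by_cases hc : i' = 1 ∧ j' = 1
      · obtain ⟨h1, h2⟩ := hc; subst h1; subst h2
        simp [step, upd]
      · have h1 : ¬ (i' = 1 ∧ j' = 0) := by omega
        have h2 : ¬ (i' = 0 ∧ j' = 1) := by omega
        simp [step, upd, hc, h1, h2]
    rw [h]
    exact (ih _).comp (hg _ _)

/-- Flip the value of a block at position `(1,1)`. -/
def flipB {r : ℕ} (b : TriBlock r) : TriBlock r :=
  fun q => if q.1 = ((1, 1) : ℕ × ℕ) then b q + 1 else b q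

lemma mem11 {r : ℕ} (hr : 1 ≤ r) : ((1, 1) : ℕ × ℕ) ∈ Tri r := by
  simp only [Tri, Finset.mem_filter, Finset.mem_product, Finset.mem_range]
  omega

lemma flipB_flipB {r : ℕ} (b : TriBlock r) : flipB (flipB b) = b := by
  funext q
  have h2 : ∀ v : Fin 2, v + 1 + 1 = v := by decide
  by_cases h : q.1 = ((1, 1) : ℕ × ℕ)
  · simp only [flipB, if_pos h, h2]
  · simp only [flipB, if_neg h]

lemma ext_eq_upd {r : ℕ} (hr : 1 ≤ r) (b : TriBlock r) :
    ext b = upd (ext b) (b ⟨(1, 1), mem11 hr⟩) := by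
  funext i j
  by_cases h : i = 1 ∧ j = 1
  · obtain ⟨h1, h2⟩ := h; subst h1; subst h2
    simp only [upd, ext]
    rw [dif_pos (mem11 hr)]
    simp
  · simp [upd, h]

lemma ext_flipB {r : ℕ} (hr : 1 ≤ r) (b : TriBlock r) :
    ext (flipB b) = upd (ext b) (b ⟨(1, 1), mem11 hr⟩ + 1) := by
  funext i j
  by_cases h : i = 1 ∧ j = 1
  · obtain ⟨h1, h2⟩ := h; subst h1; subst h2
    simp only [upd, ext]
    rw [dif_pos (mem11 hr)]
    simp [flipB]
  · have hne : ((i, j) : ℕ × ℕ) ≠ (1, 1) := by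
      intro he
      exact h ⟨congrArg Prod.fst he, congrArg Prod.snd he⟩
    simp only [upd, if_neg h, ext]
    by_cases hm : ((i, j) : ℕ × ℕ) ∈ Tri r
    · rw [dif_pos hm, dif_pos hm]
      simp only [flipB]
      rw [if_neg hne]
    · rw [dif_neg hm, dif_neg hm]

lemma tri_card : ∀ r : ℕ, (Tri r).card * 2 = r * (r + 1) := by
  intro r
  induction r with
  | zero => decide
  | succ r ih =>
    have hsplit : Tri (r + 1)
        = Tri r ∪ (Finset.range (r + 1)).image (fun i => (i + 1, r + 1 - i)) := by
      ext ⟨a, b⟩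
      simp only [Tri, Finset.mem_union, Finset.mem_filter, Finset.mem_product,
        Finset.mem_range, Finset.mem_image, Prod.mk.injEq]
      constructor
      · rintro ⟨⟨ha, hb⟩, h1, h2, h3⟩
        by_cases hd : a + b ≤ r + 1
        · left; exact ⟨⟨by omega, by omega⟩, h1, h2, hd⟩
        · right; exact ⟨a - 1, by omega, by omega, by omega⟩
      · rintro (⟨⟨ha, hb⟩, h1, h2, h3⟩ | ⟨i, hi, hia, hib⟩)
        · exact ⟨⟨by omega, by omega⟩, h1, h2, by omega⟩
        · exact ⟨⟨by omega, by omega⟩, by omega, by omega, by omega⟩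
    have hdisj : Disjoint (Tri r)
        ((Finset.range (r + 1)).image (fun i => (i + 1, r + 1 - i))) := by
      rw [Finset.disjoint_left]
      rintro ⟨a, b⟩ hmem hmem2
      simp only [Tri, Finset.mem_filter, Finset.mem_product, Finset.mem_range] at hmem
      simp only [Finset.mem_image, Finset.mem_range, Prod.mk.injEq] at hmem2
      obtain ⟨i, hi, hia, hib⟩ := hmem2
      omega
    have himg : ((Finset.range (r + 1)).image (fun i => (i + 1, r + 1 - i))).card
        = r + 1 := by
      rw [Finset.card_image_of_injOn, Finset.card_range]
      intro x hx y hy hxy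
      simp only [Prod.mk.injEq] at hxy
      omega
    rw [hsplit, Finset.card_union_of_disjoint hdisj, himg]
    have hr : (r + 1) * (r + 1 + 1) = r * (r + 1) + (r + 1) * 2 := by ring
    omega

lemma card_triBlock (r : ℕ) : Fintype.card (TriBlock r) = 2 ^ (Tri r).card := by
  have h : Fintype.card (TriBlock r)
      = Fintype.card ({p // p ∈ Tri r} → Fin 2) :=
    Fintype.card_congr (Equiv.refl _)
  rw [h, Fintype.card_fun, Fintype.card_coe, Fintype.card_fin]

/-- if `g` is permutive in the center variable, then for every
`n ≥ 1` the number of size-`n+1` blocks mapping to the single cell `1` under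
`gⁿ` equals `2^((n²+3n)/2)`, i.e. exactly half of all size-`n+1` blocks. -/
theorem stmt6 (g : Fin 2 → Fin 2 → Fin 2 → Fin 2)
    (hg : ∀ x z, Function.Bijective (fun y => g x y z))
    (n : ℕ) (hn : 1 ≤ n) :
    (preimages g n).card = 2 ^ ((n ^ 2 + 3 * n) / 2) ∧
      2 * (preimages g n).card = Fintype.card (TriBlock (n + 1)) := by
  have hr : 1 ≤ n + 1 := by omega
  have hmem1 : ((1, 1) : ℕ × ℕ) ∈ Tri 1 := mem11 le_rfl
  -- rewrite preimages as the fiber over 1 of the value at (1,1)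
  have hpre : preimages g n
      = Finset.univ.filter (fun b : TriBlock (n + 1) =>
          (step g)^[n] (ext b) 1 1 = 1) := by
    unfold preimages
    apply Finset.filter_congr
    intro b _
    constructor
    · intro h
      have := congrFun h ⟨(1, 1), hmem1⟩
      simpa [evolveN, contract, oneBlock] using this
    · intro h
      funext q
      obtain ⟨⟨i, j⟩, hq⟩ := q
      simp only [Tri, Finset.mem_filter, Finset.mem_product, Finset.mem_range] at hq
      have hij : i = 1 ∧ j = 1 := by omega
      obtain ⟨h1, h2⟩ := hij; subst h1; subst h2
      simpa [evolveN, contract, oneBlock] using h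
  -- flipping the value at (1,1) flips the output
  have hflip : ∀ b : TriBlock (n + 1),
      (step g)^[n] (ext (flipB b)) 1 1 ≠ (step g)^[n] (ext b) 1 1 := by
    intro b heq
    rw [ext_flipB hr b] at heq
    conv_rhs at heq => rw [ext_eq_upd hr b]
    have hinj := (key g hg n (ext b)).injective heq
    have h2 : ∀ v : Fin 2, v + 1 ≠ v := by decide
    exact h2 _ hinj
  -- the fiber over 1 and the fiber over not-1 have equal cardinality
  have hfin2 : ∀ u v : Fin 2, u ≠ v → ((v = 1 → ¬ u = 1) ∧ (¬ v = 1 → u = 1)) := by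
    decide
  have hcard2 :
      (Finset.univ.filter (fun b : TriBlock (n + 1) =>
          (step g)^[n] (ext b) 1 1 = 1)).card
      = (Finset.univ.filter (fun b : TriBlock (n + 1) =>
          ¬ (step g)^[n] (ext b) 1 1 = 1)).card := by
    apply Finset.card_bij' (fun b _ => flipB b) (fun b _ => flipB b)
    · intro b hb
      simp only [Finset.mem_filter, Finset.mem_univ, true_and] at hb ⊢
      exact (hfin2 _ _ (hflip b)).1 hb
    · intro b hb
      simp only [Finset.mem_filter, Finset.mem_univ, true_and] at hb ⊢
      exact (hfin2 _ _ (hflip b)).2 hb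
    · intro b _; exact flipB_flipB b
    · intro b _; exact flipB_flipB b
  have hsum := Finset.card_filter_add_card_filter_not
    (s := (Finset.univ : Finset (TriBlock (n + 1))))
    (p := fun b => (step g)^[n] (ext b) 1 1 = 1)
  rw [Finset.card_univ] at hsum
  -- arithmetic
  have htc : (Tri (n + 1)).card * 2 = (n + 1) * (n + 1 + 1) := tri_card (n + 1)
  have hring : (n + 1) * (n + 1 + 1) = n ^ 2 + 3 * n + 2 := by ring
  have hcdiv : (Tri (n + 1)).card = (n ^ 2 + 3 * n) / 2 + 1 := by omega
  have hcard : Fintype.card (TriBlock (n + 1)) = 2 ^ ((n ^ 2 + 3 * n) / 2 + 1) := by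
    rw [card_triBlock, hcdiv]
  have hp : (2 : ℕ) ^ ((n ^ 2 + 3 * n) / 2 + 1) = 2 * 2 ^ ((n ^ 2 + 3 * n) / 2) := by
    rw [pow_succ]; ring
  rw [hpre]
  constructor
  · omega
  · omega
end

section
/- If a local rule g : {0,1}³ → {0,1} is permutive with respect to any of its three variables, then the associated global map G : {0,1}^(ℤ×ℤ) → {0,1}^(ℤ×ℤ), defined by G(s)(i,j) = g(s(i,j+1), s(i,j), s(i+1,j)), is surjective. -/
/-- The global map of the 2D CA with L-shaped neighbourhood:
`G(s)(i,j) = g(s(i,j+1), s(i,j), s(i+1,j))`. -/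
def globalMap (g : Fin 2 → Fin 2 → Fin 2 → Fin 2) (s : ℤ × ℤ → Fin 2) :
    ℤ × ℤ → Fin 2 :=
  fun p => g (s (p.1, p.2 + 1)) (s p) (s (p.1 + 1, p.2))

/-- Iterated sequence of lines, starting from the zero line. -/
def lineSeq (next : ℕ → (ℤ → Fin 2) → ℤ → Fin 2) : ℕ → ℤ → Fin 2
  | 0 => fun _ => 0
  | n + 1 => next n (lineSeq next n)

lemma continuous_globalMap_apply (g : Fin 2 → Fin 2 → Fin 2 → Fin 2) (p : ℤ × ℤ) :
    Continuous (fun s : ℤ × ℤ → Fin 2 => globalMap g s p) := by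
  have hc : Continuous (fun q : Fin 2 × Fin 2 × Fin 2 => g q.1 q.2.1 q.2.2) :=
    continuous_of_discreteTopology
  have h1 : Continuous (fun s : ℤ × ℤ → Fin 2 =>
      ((s (p.1, p.2 + 1), s p, s (p.1 + 1, p.2)) : Fin 2 × Fin 2 × Fin 2)) :=
    (continuous_apply (p.1, p.2 + 1)).prodMk
      ((continuous_apply p).prodMk (continuous_apply (p.1 + 1, p.2)))
  exact hc.comp h1

/-- Compactness: if every finite set of constraints is satisfiable, then t has a preimage. -/
lemma compactness_step (g : Fin 2 → Fin 2 → Fin 2 → Fin 2) (t : ℤ × ℤ → Fin 2)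
    (h : ∀ F : Finset (ℤ × ℤ), ∃ s, ∀ p ∈ F, globalMap g s p = t p) :
    ∃ s, globalMap g s = t := by
  set U : Finset (ℤ × ℤ) → Set (ℤ × ℤ → Fin 2) :=
    fun F => {s | ∀ p ∈ F, globalMap g s p = t p} with hU
  have hcl : ∀ F, IsClosed (U F) := by
    intro F
    have : U F = ⋂ p ∈ F, (fun s => globalMap g s p) ⁻¹' {t p} := by
      ext s; simp [hU]
    rw [this]
    exact isClosed_biInter fun p _ =>
      (isClosed_singleton).preimage (continuous_globalMap_apply g p)
  have hd : Directed (fun x1 x2 => x1 ⊇ x2) U := by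
    intro F F'
    exact ⟨F ∪ F', fun s hs p hp => hs p (Finset.mem_union_left _ hp),
      fun s hs p hp => hs p (Finset.mem_union_right _ hp)⟩
  obtain ⟨s, hs⟩ := IsCompact.nonempty_iInter_of_directed_nonempty_isCompact_isClosed
    U hd (fun F => h F) (fun F => (hcl F).isCompact) hcl
  refine ⟨s, funext fun p => ?_⟩
  have := Set.mem_iInter.mp hs {p}
  exact this p (Finset.mem_singleton_self p)

lemma partial_x (g : Fin 2 → Fin 2 → Fin 2 → Fin 2)
    (hg : ∀ y z, Function.Bijective (fun x => g x y z))
    (t : ℤ × ℤ → Fin 2) (F : Finset (ℤ × ℤ)) :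
    ∃ s, ∀ p ∈ F, globalMap g s p = t p := by
  obtain ⟨M, hM⟩ := Finset.exists_le (F.image fun p => -p.2)
  set j₀ : ℤ := -M with hj₀def
  have hj₀ : ∀ p ∈ F, j₀ ≤ p.2 := fun p hp => by
    have := hM _ (Finset.mem_image_of_mem _ hp); omega
  choose Finv hFinv using fun y z => (hg y z).surjective
  set u : ℕ → ℤ → Fin 2 :=
    lineSeq (fun n un i => Finv (un i) (un (i + 1)) (t (i, j₀ + n))) with hu
  refine ⟨fun p => if j₀ ≤ p.2 then u (p.2 - j₀).toNat p.1 else 0, ?_⟩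
  rintro ⟨a, b⟩ hp
  have hb : j₀ ≤ b := hj₀ _ hp
  show g (if j₀ ≤ b + 1 then _ else _) (if j₀ ≤ b then _ else _)
      (if j₀ ≤ b then _ else _) = _
  rw [if_pos (by omega : j₀ ≤ b + 1), if_pos hb, if_pos hb]
  set n : ℕ := (b - j₀).toNat with hn
  have h1 : (b + 1 - j₀).toNat = n + 1 := by omega
  have h2 : j₀ + (n : ℤ) = b := by omega
  rw [h1]
  have : u (n + 1) a = Finv (u n a) (u n (a + 1)) (t (a, j₀ + n)) := rfl
  rw [this, h2]
  exact hFinv (u n a) (u n (a + 1)) (t (a, b))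

lemma partial_z (g : Fin 2 → Fin 2 → Fin 2 → Fin 2)
    (hg : ∀ x y, Function.Bijective (fun z => g x y z))
    (t : ℤ × ℤ → Fin 2) (F : Finset (ℤ × ℤ)) :
    ∃ s, ∀ p ∈ F, globalMap g s p = t p := by
  obtain ⟨M, hM⟩ := Finset.exists_le (F.image fun p => -p.1)
  set i₀ : ℤ := -M with hi₀def
  have hi₀ : ∀ p ∈ F, i₀ ≤ p.1 := fun p hp => by
    have := hM _ (Finset.mem_image_of_mem _ hp); omega
  choose Finv hFinv using fun x y => (hg x y).surjective
  set u : ℕ → ℤ → Fin 2 :=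
    lineSeq (fun n un j => Finv (un (j + 1)) (un j) (t (i₀ + n, j))) with hu
  refine ⟨fun p => if i₀ ≤ p.1 then u (p.1 - i₀).toNat p.2 else 0, ?_⟩
  rintro ⟨a, b⟩ hp
  have ha : i₀ ≤ a := hi₀ _ hp
  show g (if i₀ ≤ a then _ else _) (if i₀ ≤ a then _ else _)
      (if i₀ ≤ a + 1 then _ else _) = _
  rw [if_pos ha, if_pos ha, if_pos (by omega : i₀ ≤ a + 1)]
  set n : ℕ := (a - i₀).toNat with hn
  have h1 : (a + 1 - i₀).toNat = n + 1 := by omega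
  have h2 : i₀ + (n : ℤ) = a := by omega
  rw [h1]
  have : u (n + 1) b = Finv (u n (b + 1)) (u n b) (t (i₀ + n, b)) := rfl
  rw [this, h2]
  exact hFinv (u n (b + 1)) (u n b) (t (a, b))

lemma partial_y (g : Fin 2 → Fin 2 → Fin 2 → Fin 2)
    (hg : ∀ x z, Function.Bijective (fun y => g x y z))
    (t : ℤ × ℤ → Fin 2) (F : Finset (ℤ × ℤ)) :
    ∃ s, ∀ p ∈ F, globalMap g s p = t p := by
  obtain ⟨M, hM⟩ := Finset.exists_le (F.image fun p => p.1 + p.2)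
  set d₀ : ℤ := M + 1 with hd₀def
  have hd₀ : ∀ p ∈ F, p.1 + p.2 + 1 ≤ d₀ := fun p hp => by
    have := hM _ (Finset.mem_image_of_mem _ hp); omega
  choose Finv hFinv using fun x z => (hg x z).surjective
  set u : ℕ → ℤ → Fin 2 :=
    lineSeq (fun n un i => Finv (un i) (un (i + 1)) (t (i, d₀ - (n + 1) - i))) with hu
  refine ⟨fun p => if p.1 + p.2 ≤ d₀ then u (d₀ - (p.1 + p.2)).toNat p.1 else 0, ?_⟩
  rintro ⟨a, b⟩ hp
  have hab : a + b + 1 ≤ d₀ := hd₀ _ hp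
  show g (if a + (b + 1) ≤ d₀ then _ else _) (if a + b ≤ d₀ then _ else _)
      (if a + 1 + b ≤ d₀ then _ else _) = _
  rw [if_pos (by omega : a + (b + 1) ≤ d₀), if_pos (by omega : a + b ≤ d₀),
    if_pos (by omega : a + 1 + b ≤ d₀)]
  set n : ℕ := (d₀ - (a + b) - 1).toNat with hn
  have h1 : (d₀ - (a + (b + 1))).toNat = n := by omega
  have h2 : (d₀ - (a + b)).toNat = n + 1 := by omega
  have h3 : (d₀ - (a + 1 + b)).toNat = n := by omega
  have h4 : d₀ - ((n : ℤ) + 1) - a = b := by omega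
  rw [h1, h2, h3]
  have : u (n + 1) a = Finv (u n a) (u n (a + 1)) (t (a, d₀ - (n + 1) - a)) := rfl
  rw [this, h4]
  exact hFinv (u n a) (u n (a + 1)) (t (a, b))


/-- if the local rule is permutive with respect to any of its
three variables, then the global map is surjective. -/
theorem stmt8 (g : Fin 2 → Fin 2 → Fin 2 → Fin 2)
    (hg : (∀ y z, Function.Bijective (fun x => g x y z)) ∨
          (∀ x z, Function.Bijective (fun y => g x y z)) ∨
          (∀ x y, Function.Bijective (fun z => g x y z))) :
    Function.Surjective (globalMap g) := by
  
  intro t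
  obtain ⟨s, hs⟩ : ∃ s, globalMap g s = t := by
    apply compactness_step
    rcases hg with h | h | h
    · exact partial_x g h t
    · exact partial_y g h t
    · exact partial_z g h t
  exact ⟨s, hs⟩
end
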